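/- For every integer ℓ ≥ 1, the quantity φ(ℓ) satisfies ℓ + 1 ≤ φ(ℓ) ≤ ⌊(√(12ℓ(ℓ+1)+1) − 1)/2⌋. -/

import Mathlib

open Matrix

noncomputable section

/-- Feasibility predicate for the set in Definition of `φ`: `Y` is a symmetric positive
semidefinite `2ℓ×2ℓ` real matrix with `UᵀYU = M` and both `ℓ×ℓ` diagonal blocks equal to the
identity. -/
def phiFeas (l : ℕ) (U : Matrix (Fin (2*l)) (Fin l) ℝ)
    (M : Matrix (Fin l) (Fin l) ℝ)
    (Y : Matrix (Fin (2*l)) (Fin (2*l)) ℝ) : Prop :=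
  Y.PosSemidef ∧ Uᵀ * Y * U = M ∧
  (∀ i j : Fin l, Y ⟨(i : ℕ), by omega⟩ ⟨(j : ℕ), by omega⟩ = if i = j then (1:ℝ) else 0) ∧
  (∀ i j : Fin l, Y ⟨l + (i : ℕ), by omega⟩ ⟨l + (j : ℕ), by omega⟩ = if i = j then (1:ℝ) else 0)

/-- `φ(ℓ)`: the smallest `k : ℕ` such that for every `U : ℝ^{2ℓ×ℓ}` and every symmetric
`M : ℝ^{ℓ×ℓ}`, the feasible set is either empty or contains an element of rank at most `k`. -/
def phi (l : ℕ) : ℕ :=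
  sInf {k : ℕ |
    ∀ (U : Matrix (Fin (2*l)) (Fin l) ℝ) (M : Matrix (Fin l) (Fin l) ℝ),
      M.IsSymm → (∃ Y, phiFeas l U M Y) → ∃ Y, phiFeas l U M Y ∧ Y.rank ≤ k}

namespace PhiAux

lemma real_conjTranspose {m n : Type*} (A : Matrix m n ℝ) : Aᴴ = Aᵀ := by
  ext i j; simp [Matrix.conjTranspose_apply]

def e (l : ℕ) : Fin l ⊕ Fin l ≃ Fin (2*l) := finSumFinEquiv.trans (finCongr (two_mul l).symm)

lemma e_inl (l : ℕ) (i : Fin l) : e l (Sum.inl i) = ⟨(i:ℕ), by omega⟩ := by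
  apply Fin.ext; simp [e]

lemma e_inr (l : ℕ) (i : Fin l) : e l (Sum.inr i) = ⟨l + (i:ℕ), by omega⟩ := by
  apply Fin.ext; simp [e]; omega

abbrev Pairs (n : ℕ) := {p : Fin n × Fin n // p.1 ≤ p.2}

def sym (r : ℕ) (x : Pairs r → ℝ) : Matrix (Fin r) (Fin r) ℝ :=
  Matrix.of fun i j => if h : i ≤ j then x ⟨(i,j), h⟩ else x ⟨(j,i), le_of_not_ge h⟩

lemma sym_add (r : ℕ) (x y : Pairs r → ℝ) : sym r (x + y) = sym r x + sym r y := by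
  ext i j; by_cases h : i ≤ j <;> simp [sym, h]

lemma sym_smul (r : ℕ) (c : ℝ) (x : Pairs r → ℝ) : sym r (c • x) = c • sym r x := by
  ext i j; by_cases h : i ≤ j <;> simp [sym, h]

lemma sym_transpose (r : ℕ) (x : Pairs r → ℝ) : (sym r x)ᵀ = sym r x := by
  ext i j
  rw [Matrix.transpose_apply]
  by_cases hij : i ≤ j <;> by_cases hji : j ≤ i <;> simp [sym, hij, hji]
  · have : i = j := le_antisymm hij hji
    subst this; rfl
  · omega

lemma sym_eq_zero (r : ℕ) {x : Pairs r → ℝ} (h : sym r x = 0) : x = 0 := by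
  funext q
  have : sym r x q.1.1 q.1.2 = 0 := by rw [h]; rfl
  rw [sym] at this
  simpa [Matrix.of_apply, q.2] using this


lemma sum_split (l : ℕ) (f : Fin (2*l) → ℝ) :
    ∑ p, f p = ∑ i, f (e l (Sum.inl i)) + ∑ i, f (e l (Sum.inr i)) := by
  rw [← Fintype.sum_equiv (e l) (fun x => f (e l x)) f (fun x => rfl), Fintype.sum_sum_type]

/-- PSD decomposition with rank many columns. -/
lemma psd_decomp {n r : ℕ} {Y : Matrix (Fin n) (Fin n) ℝ} (hY : Y.PosSemidef)
    (hr : Y.rank = r) : ∃ C : Matrix (Fin n) (Fin r) ℝ, Y = C * Cᵀ := by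
  have hH := hY.isHermitian
  set μ := hH.eigenvalues with hμ
  have hμ0 : ∀ i, 0 ≤ μ i := hY.eigenvalues_nonneg
  have hcard : Fintype.card {i // μ i ≠ 0} = r := by
    rw [← hH.rank_eq_card_non_zero_eigs, hr]
  set V : Matrix (Fin n) (Fin n) ℝ := (hH.eigenvectorUnitary : Matrix (Fin n) (Fin n) ℝ) with hV
  have hofr : (RCLike.ofReal ∘ μ : Fin n → ℝ) = μ := by funext i; simp
  have hspec : Y = V * diagonal μ * star V := by
    have h := hH.spectral_theorem
    rw [hofr] at h; exact h
  let g : Fin r ≃ {i // μ i ≠ 0} := (Fintype.equivFinOfCardEq hcard).symm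
  refine ⟨Matrix.of fun p k => V p (g k) * Real.sqrt (μ (g k)), ?_⟩
  ext p q
  rw [hspec, Matrix.mul_apply]
  have hentry : ∀ s, (V * diagonal μ) p s * (star V) s q = V p s * μ s * V q s := by
    intro s
    rw [Matrix.mul_diagonal, Matrix.star_eq_conjTranspose, Matrix.conjTranspose_apply,
      star_trivial]
  simp only [hentry]
  have h1 : ∑ s, V p s * μ s * V q s = ∑ s : {i // μ i ≠ 0}, V p s * μ s * V q s := by
    rw [← Finset.sum_subtype (Finset.univ.filter (fun s => μ s ≠ 0)) (by simp)
      (fun s => V p s * μ s * V q s)]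
    rw [Finset.sum_filter_of_ne]
    intro x _ hx hμx
    exact hx (by rw [hμx]; ring)
  rw [h1, ← Fintype.sum_equiv g (fun k => V p (g k) * μ (g k) * V q (g k))
    (fun s => V p s * μ s * V q s) (fun k => rfl)]
  rw [Matrix.mul_apply]
  congr 1
  funext k
  simp only [Matrix.of_apply, Matrix.transpose_apply]
  have : Real.sqrt (μ (g k)) * Real.sqrt (μ (g k)) = μ (g k) :=
    Real.mul_self_sqrt (hμ0 _)
  ring_nf
  rw [Real.sq_sqrt (hμ0 _)]
  ring


def pairsEquiv (n : ℕ) : Pairs n ≃ Σ j : Fin n, Fin ((j:ℕ)+1) where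
  toFun q := ⟨q.1.2, ⟨(q.1.1 : ℕ), by have := q.2; omega⟩⟩
  invFun x := ⟨(⟨(x.2 : ℕ), by have := x.2.isLt; have := x.1.isLt; omega⟩, x.1), by
    simp [Fin.le_def]; omega⟩
  left_inv q := by
    apply Subtype.ext
    apply Prod.ext <;> apply Fin.ext <;> simp
  right_inv x := by
    apply Sigma.ext <;> simp

lemma two_mul_card_pairs (n : ℕ) : 2 * Fintype.card (Pairs n) = n * (n+1) := by
  rw [Fintype.card_congr (pairsEquiv n)]
  rw [Fintype.card_sigma]
  simp only [Fintype.card_fin]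
  rw [Fin.sum_univ_eq_sum_range (fun j => j + 1)]
  induction n with
  | zero => simp
  | succ m ih => rw [Finset.sum_range_succ, Nat.mul_add, ih]; ring

lemma exists_ker_ne_zero {D C : Type*} [AddCommGroup D] [Module ℝ D] [AddCommGroup C]
    [Module ℝ C] [FiniteDimensional ℝ D] [FiniteDimensional ℝ C]
    (f : D →ₗ[ℝ] C) (h : Module.finrank ℝ C < Module.finrank ℝ D) :
    ∃ x : D, x ≠ 0 ∧ f x = 0 := by
  have : ¬ Function.Injective f := fun hinj =>
    absurd (LinearMap.finrank_le_finrank_of_injective hinj) (by omega)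
  rw [Function.not_injective_iff] at this
  obtain ⟨x, y, hxy, hne⟩ := this
  exact ⟨x - y, sub_ne_zero.mpr hne, by rw [map_sub, hxy, sub_self]⟩


lemma rank_drop (l : ℕ) (U : Matrix (Fin (2*l)) (Fin l) ℝ) (M : Matrix (Fin l) (Fin l) ℝ)
    (Y : Matrix (Fin (2*l)) (Fin (2*l)) ℝ) (hY : phiFeas l U M Y)
    (h : 3*(l*(l+1)) < Y.rank * (Y.rank + 1)) :
    ∃ Y', phiFeas l U M Y' ∧ Y'.rank < Y.rank := by
  classical
  set r := Y.rank with hr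
  have hrpos : 0 < r := by nlinarith
  obtain ⟨C, hC⟩ := psd_decomp hY.1 rfl
  -- the linear constraint map
  let F : (Pairs r → ℝ) →ₗ[ℝ] ((Pairs l → ℝ) × (Pairs l → ℝ) × (Pairs l → ℝ)) :=
    { toFun := fun x =>
        (fun q => (Uᵀ * (C * sym r x * Cᵀ) * U) q.1.1 q.1.2,
         fun q => (C * sym r x * Cᵀ) (e l (Sum.inl q.1.1)) (e l (Sum.inl q.1.2)),
         fun q => (C * sym r x * Cᵀ) (e l (Sum.inr q.1.1)) (e l (Sum.inr q.1.2)))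
      map_add' := by
        intro x y
        refine Prod.ext ?_ (Prod.ext ?_ ?_) <;> funext q <;>
          simp [sym_add, Matrix.mul_add, Matrix.add_mul]
      map_smul' := by
        intro c x
        refine Prod.ext ?_ (Prod.ext ?_ ?_) <;> funext q <;>
          simp [sym_smul, Matrix.mul_smul, Matrix.smul_mul] }
  have hfr : Module.finrank ℝ ((Pairs l → ℝ) × (Pairs l → ℝ) × (Pairs l → ℝ))
      < Module.finrank ℝ (Pairs r → ℝ) := by
    rw [Module.finrank_prod, Module.finrank_prod, Module.finrank_pi, Module.finrank_pi]
    have h1 := two_mul_card_pairs r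
    have h2 := two_mul_card_pairs l
    omega
  obtain ⟨x, hx0, hFx⟩ := exists_ker_ne_zero F hfr
  set Δ := sym r x with hΔ
  have hΔ0 : Δ ≠ 0 := fun hz => hx0 (sym_eq_zero r hz)
  have hΔt : Δᵀ = Δ := sym_transpose r x
  set Z : Matrix (Fin (2*l)) (Fin (2*l)) ℝ := C * Δ * Cᵀ with hZ
  have hZt : Zᵀ = Z := by
    rw [hZ, Matrix.transpose_mul, Matrix.transpose_mul, Matrix.transpose_transpose, hΔt,
      Matrix.mul_assoc]
  have hF1 : ∀ q : Pairs l, (Uᵀ * Z * U) q.1.1 q.1.2 = 0 := fun q =>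
    congrFun (congrArg Prod.fst hFx) q
  have hF2 : ∀ q : Pairs l, Z (e l (Sum.inl q.1.1)) (e l (Sum.inl q.1.2)) = 0 := fun q =>
    congrFun (congrArg (fun z => z.2.1) hFx) q
  have hF3 : ∀ q : Pairs l, Z (e l (Sum.inr q.1.1)) (e l (Sum.inr q.1.2)) = 0 := fun q =>
    congrFun (congrArg (fun z => z.2.2) hFx) q
  have hW : Uᵀ * Z * U = 0 := by
    have hWt : (Uᵀ * Z * U)ᵀ = Uᵀ * Z * U := by
      rw [Matrix.transpose_mul, Matrix.transpose_mul, Matrix.transpose_transpose, hZt]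
      simp only [hZ, Matrix.mul_assoc]
    ext i j
    rcases le_total i j with hij | hji
    · exact hF1 ⟨(i, j), hij⟩
    · have := hF1 ⟨(j, i), hji⟩
      calc (Uᵀ * Z * U) i j = (Uᵀ * Z * U)ᵀ j i := rfl
        _ = (Uᵀ * Z * U) j i := by rw [hWt]
        _ = 0 := this
  have hZsymm : ∀ p q, Z p q = Z q p := by
    intro p q
    conv_lhs => rw [← hZt]
    rfl
  have hZll : ∀ i j : Fin l, Z (e l (Sum.inl i)) (e l (Sum.inl j)) = 0 := by
    intro i j
    rcases le_total i j with hij | hji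
    · exact hF2 ⟨(i, j), hij⟩
    · rw [hZsymm]; exact hF2 ⟨(j, i), hji⟩
  have hZrr : ∀ i j : Fin l, Z (e l (Sum.inr i)) (e l (Sum.inr j)) = 0 := by
    intro i j
    rcases le_total i j with hij | hji
    · exact hF3 ⟨(i, j), hij⟩
    · rw [hZsymm]; exact hF3 ⟨(j, i), hji⟩
  -- spectral data of Δ
  have hΔH : Δ.IsHermitian := by
    rw [Matrix.IsHermitian, real_conjTranspose, hΔt]
  set ν := hΔH.eigenvalues with hν
  set V : Matrix (Fin r) (Fin r) ℝ := (hΔH.eigenvectorUnitary : Matrix (Fin r) (Fin r) ℝ)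
    with hV
  have hVu : V * star V = 1 :=
    Matrix.mem_unitaryGroup_iff.mp (hΔH.eigenvectorUnitary).2
  have hofr : (RCLike.ofReal ∘ ν : Fin r → ℝ) = ν := by funext i; simp
  have hspec : Δ = V * diagonal ν * star V := by
    have h := hΔH.spectral_theorem
    rw [hofr] at h; exact h
  have hνne : ¬ (∀ i, ν i = 0) := by
    intro hall
    apply hΔ0
    have : diagonal ν = 0 := by
      ext i j; by_cases hij : i = j <;> simp [Matrix.diagonal_apply, hij, hall]
    rw [hspec, this, Matrix.mul_zero, Matrix.zero_mul]
  obtain ⟨i₀, -, hi₀⟩ := Finset.exists_max_image Finset.univ (fun i => |ν i|)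
    ⟨⟨0, hrpos⟩, Finset.mem_univ _⟩
  have hν₀ : ν i₀ ≠ 0 := by
    intro h0
    apply hνne
    intro i
    have := hi₀ i (Finset.mem_univ i)
    rw [h0] at this
    simpa using abs_nonpos_iff.mp (le_trans this (by simp))
  set t : ℝ := -(ν i₀)⁻¹ with ht
  set d : Fin r → ℝ := fun i => 1 + t * ν i with hd
  have hdnn : ∀ i, 0 ≤ d i := by
    intro i
    have h1 : |t * ν i| ≤ 1 := by
      rw [abs_mul, ht, abs_neg, abs_inv]
      rw [inv_mul_le_iff₀ (abs_pos.mpr hν₀), mul_one]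
      exact hi₀ i (Finset.mem_univ i)
    have := neg_abs_le (t * ν i)
    simp only [hd]
    linarith
  have hd0 : d i₀ = 0 := by
    simp only [hd, ht]
    field_simp
    norm_num
  set P : Matrix (Fin r) (Fin r) ℝ := V * diagonal d * star V with hP
  have hPpsd : P.PosSemidef := by
    have := (Matrix.posSemidef_diagonal_iff.mpr hdnn).mul_mul_conjTranspose_same V
    rwa [← Matrix.star_eq_conjTranspose] at this
  have hdetV : IsUnit V.det ∧ IsUnit (star V).det := by
    have := congrArg Matrix.det hVu
    rw [Matrix.det_mul, Matrix.det_one] at this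
    exact ⟨IsUnit.of_mul_eq_one _ this, IsUnit.of_mul_eq_one _ (by rw [mul_comm]; exact this)⟩
  have hPrank : P.rank < r := by
    rw [hP, Matrix.rank_mul_eq_left_of_isUnit_det (star V) (V * diagonal d) hdetV.2,
      Matrix.rank_mul_eq_right_of_isUnit_det V (diagonal d) hdetV.1, Matrix.rank_diagonal]
    have := Fintype.card_subtype_lt (p := fun i => d i ≠ 0) (x := i₀) (by simp [hd0])
    simpa using this
  have hPI : P = 1 + t • Δ := by
    have hdiag : diagonal d = 1 + t • diagonal ν := by
      ext i j
      by_cases hij : i = j <;>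
        simp [Matrix.diagonal_apply, hd, Matrix.one_apply, hij]
    rw [hP, hdiag, Matrix.mul_add, Matrix.add_mul, Matrix.mul_one, hVu,
      Matrix.mul_smul, Matrix.smul_mul, ← hspec]
  set Y' := C * P * Cᵀ with hY'
  have hY'Y : Y' = Y + t • Z := by
    rw [hY', hPI, Matrix.mul_add, Matrix.add_mul, Matrix.mul_one, Matrix.mul_smul,
      Matrix.smul_mul, ← hC, hZ]
  refine ⟨Y', ⟨?_, ?_, ?_, ?_⟩, ?_⟩
  · have := hPpsd.mul_mul_conjTranspose_same C
    rwa [real_conjTranspose] at this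
  · rw [hY'Y, Matrix.mul_add, Matrix.add_mul, Matrix.mul_smul, Matrix.smul_mul, hW,
      smul_zero, add_zero]
    exact hY.2.1
  · intro i j
    have h1 := hY.2.2.1 i j
    have h2 := hZll i j
    rw [e_inl, e_inl] at h2
    rw [hY'Y, Matrix.add_apply, Matrix.smul_apply, h2, smul_zero, add_zero]
    exact h1
  · intro i j
    have h1 := hY.2.2.2 i j
    have h2 := hZrr i j
    rw [e_inr, e_inr] at h2
    rw [hY'Y, Matrix.add_apply, Matrix.smul_apply, h2, smul_zero, add_zero]
    exact h1
  · calc Y'.rank = (C * (P * Cᵀ)).rank := by rw [hY', Matrix.mul_assoc]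
      _ ≤ (P * Cᵀ).rank := Matrix.rank_mul_le_right _ _
      _ ≤ P.rank := Matrix.rank_mul_le_left _ _
      _ < r := hPrank


lemma exists_small_rank_feas (l : ℕ) (U : Matrix (Fin (2*l)) (Fin l) ℝ)
    (M : Matrix (Fin l) (Fin l) ℝ) (hne : ∃ Y, phiFeas l U M Y) :
    ∃ Y, phiFeas l U M Y ∧ Y.rank * (Y.rank + 1) ≤ 3*(l*(l+1)) := by
  classical
  set S : Set ℕ := {r : ℕ | ∃ Y, phiFeas l U M Y ∧ Y.rank = r} with hS
  obtain ⟨Y, hY⟩ := hne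
  have hSne : S.Nonempty := ⟨Y.rank, Y, hY, rfl⟩
  obtain ⟨Y₀, hY₀, hrk⟩ := Nat.sInf_mem hSne
  refine ⟨Y₀, hY₀, ?_⟩
  by_contra hcon
  push_neg at hcon
  obtain ⟨Y', hY', hlt⟩ := rank_drop l U M Y₀ hY₀ hcon
  have : sInf S ≤ Y'.rank := Nat.sInf_le ⟨Y', hY', rfl⟩
  omega

lemma rank_le_bound (l r : ℕ) (hl : 1 ≤ l) (hr : r * (r+1) ≤ 3*(l*(l+1))) :
    (r : ℤ) ≤ ⌊(Real.sqrt (12 * (l : ℝ) * ((l : ℝ) + 1) + 1) - 1) / 2⌋ := by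
  set A : ℝ := 12 * (l : ℝ) * ((l : ℝ) + 1) + 1 with hA
  have hAnn : 0 ≤ A := by positivity
  rw [Int.le_floor]
  have hsq : ((2*r+1 : ℕ) : ℝ) ≤ Real.sqrt A := by
    rw [Real.le_sqrt (by positivity) hAnn]
    have hr' : ((r * (r+1) : ℕ) : ℝ) ≤ ((3*(l*(l+1)) : ℕ) : ℝ) := by exact_mod_cast hr
    push_cast at hr' ⊢
    nlinarith
  push_cast at hsq ⊢
  linarith

lemma floor_nonneg_bound (l : ℕ) (hl : 1 ≤ l) :
    0 ≤ ⌊(Real.sqrt (12 * (l : ℝ) * ((l : ℝ) + 1) + 1) - 1) / 2⌋ := by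
  rw [Int.le_floor]
  have h1 : (1:ℝ) ≤ Real.sqrt (12 * (l : ℝ) * ((l : ℝ) + 1) + 1) := by
    rw [Real.le_sqrt (by norm_num) (by positivity)]
    have : (1:ℝ) ≤ (l:ℝ) := by exact_mod_cast hl
    nlinarith
  push_cast
  linarith


section Lower

variable (l : ℕ) (hl : 0 < l)

def i0 : Fin l := ⟨0, hl⟩

def sv : Fin l → ℝ := fun i => if i = i0 l hl then 1/2 else 1

def Ub : Matrix (Fin (2*l)) (Fin l) ℝ :=
  Matrix.of fun p j => (if p = e l (Sum.inl j) then (1:ℝ) else 0) +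
    (if p = e l (Sum.inr j) then (1:ℝ) else 0)

def Mb : Matrix (Fin l) (Fin l) ℝ :=
  Matrix.of fun i j => if i = j then 2 + 2 * sv l hl i else 0

lemma quad_apply (Y : Matrix (Fin (2*l)) (Fin (2*l)) ℝ) (i j : Fin l) :
    ((Ub l)ᵀ * Y * Ub l) i j =
      Y (e l (Sum.inl i)) (e l (Sum.inl j)) + Y (e l (Sum.inl i)) (e l (Sum.inr j)) +
      Y (e l (Sum.inr i)) (e l (Sum.inl j)) + Y (e l (Sum.inr i)) (e l (Sum.inr j)) := by
  have hcol : ∀ q : Fin (2*l), ((Ub l)ᵀ * Y) i q =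
      Y (e l (Sum.inl i)) q + Y (e l (Sum.inr i)) q := by
    intro q
    rw [Matrix.mul_apply]
    simp only [Matrix.transpose_apply, Ub, Matrix.of_apply, add_mul, ite_mul, one_mul, zero_mul]
    rw [Finset.sum_add_distrib]
    simp [Finset.sum_ite_eq']
  rw [Matrix.mul_apply]
  simp only [hcol]
  simp only [Ub, Matrix.of_apply, mul_add, mul_ite, mul_one, mul_zero]
  rw [Finset.sum_add_distrib]
  simp only [Finset.sum_ite_eq', Finset.mem_univ, if_true]
  ring


def Sb : Matrix (Fin l) (Fin l) ℝ := Matrix.diagonal (sv l hl)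

def Yw : Matrix (Fin (2*l)) (Fin (2*l)) ℝ :=
  (Matrix.fromBlocks 1 (Sb l hl) (Sb l hl) 1).submatrix (e l).symm (e l).symm

lemma fromBlocks_psd : (Matrix.fromBlocks 1 (Sb l hl) (Sb l hl) 1).PosSemidef := by
  rw [Matrix.posSemidef_iff_dotProduct_mulVec]
  constructor
  · rw [Matrix.IsHermitian, Matrix.fromBlocks_conjTranspose]
    congr 1 <;> try rw [Matrix.conjTranspose_one]
    all_goals rw [real_conjTranspose, Sb, Matrix.diagonal_transpose]
  · intro x
    rw [dotProduct]
    have hterm : ∀ p, star x p * (Matrix.fromBlocks 1 (Sb l hl) (Sb l hl) 1 *ᵥ x) p =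
        x p * ∑ q, Matrix.fromBlocks 1 (Sb l hl) (Sb l hl) 1 p q * x q := by
      intro p; rw [Matrix.mulVec, dotProduct]; simp
    simp only [hterm]
    rw [Fintype.sum_sum_type]
    have hL : ∀ i : Fin l, (∑ q, Matrix.fromBlocks 1 (Sb l hl) (Sb l hl) 1 (Sum.inl i) q * x q)
        = x (Sum.inl i) + sv l hl i * x (Sum.inr i) := by
      intro i
      rw [Fintype.sum_sum_type]
      simp [Matrix.fromBlocks, Sb, Matrix.one_apply, Matrix.diagonal_apply, ite_mul,
        Finset.sum_ite_eq]
    have hR : ∀ i : Fin l, (∑ q, Matrix.fromBlocks 1 (Sb l hl) (Sb l hl) 1 (Sum.inr i) q * x q)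
        = sv l hl i * x (Sum.inl i) + x (Sum.inr i) := by
      intro i
      rw [Fintype.sum_sum_type]
      simp [Matrix.fromBlocks, Sb, Matrix.one_apply, Matrix.diagonal_apply, ite_mul,
        Finset.sum_ite_eq]
    simp only [hL, hR]
    rw [← Finset.sum_add_distrib]
    apply Finset.sum_nonneg
    intro i _
    set a := x (Sum.inl i)
    set b := x (Sum.inr i)
    by_cases hi : i = i0 l hl <;> simp only [sv, hi, if_true, if_false] <;>
      [nlinarith [sq_nonneg (2*a + b), sq_nonneg (a + 2*b)]; nlinarith [sq_nonneg (a + b)]]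

lemma Yw_apply (x y : Fin l ⊕ Fin l) :
    Yw l hl (e l x) (e l y) = Matrix.fromBlocks 1 (Sb l hl) (Sb l hl) 1 x y := by
  rw [Yw, Matrix.submatrix_apply, Equiv.symm_apply_apply, Equiv.symm_apply_apply]

lemma Mb_symm : (Mb l hl).IsSymm := by
  rw [Matrix.IsSymm]
  ext i j
  rw [Matrix.transpose_apply]
  by_cases h : i = j
  · subst h; rfl
  · simp [Mb, h, Ne.symm h]

lemma Yw_feas : phiFeas l (Ub l) (Mb l hl) (Yw l hl) := by
  refine ⟨(fromBlocks_psd l hl).submatrix _, ?_, ?_, ?_⟩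
  · ext i j
    rw [quad_apply]
    simp only [Yw_apply]
    by_cases h : i = j
    · subst h
      simp [Matrix.fromBlocks, Mb, Sb, Matrix.one_apply, Matrix.diagonal_apply]
      ring
    · simp [Matrix.fromBlocks, Mb, Sb, Matrix.one_apply, Matrix.diagonal_apply, h, Ne.symm h]
  · intro i j
    rw [← e_inl, ← e_inl, Yw_apply]
    simp [Matrix.fromBlocks, Matrix.one_apply]
  · intro i j
    rw [← e_inr, ← e_inr, Yw_apply]
    simp [Matrix.fromBlocks, Matrix.one_apply]

lemma rank_ge (Y : Matrix (Fin (2*l)) (Fin (2*l)) ℝ)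
    (hbl : ∀ i j : Fin l, Y (e l (Sum.inl i)) (e l (Sum.inl j)) = if i = j then (1:ℝ) else 0) :
    l ≤ Y.rank := by
  classical
  set P : Matrix (Fin (2*l)) (Fin l) ℝ :=
    Matrix.of fun p j => if p = e l (Sum.inl j) then (1:ℝ) else 0 with hP
  have hPYP : Pᵀ * Y * P = 1 := by
    ext i j
    rw [Matrix.mul_apply]
    have h1 : ∀ q, (Pᵀ * Y) i q = Y (e l (Sum.inl i)) q := by
      intro q
      rw [Matrix.mul_apply]
      simp [hP, ite_mul, Finset.sum_ite_eq']
    simp only [h1]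
    simp only [hP, Matrix.of_apply, mul_ite, mul_one, mul_zero]
    rw [Finset.sum_ite_eq' Finset.univ (e l (Sum.inl j)) (fun q => Y (e l (Sum.inl i)) q)]
    simp [hbl i j, Matrix.one_apply]
  have : (1 : Matrix (Fin l) (Fin l) ℝ).rank ≤ Y.rank := by
    calc (1 : Matrix (Fin l) (Fin l) ℝ).rank = (Pᵀ * (Y * P)).rank := by
          rw [← Matrix.mul_assoc, hPYP]
      _ ≤ (Y * P).rank := Matrix.rank_mul_le_right _ _
      _ ≤ Y.rank := Matrix.rank_mul_le_left _ _
  simpa using this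

include hl in
lemma lower_aux (k : ℕ)
    (hk : ∀ (U : Matrix (Fin (2*l)) (Fin l) ℝ) (M : Matrix (Fin l) (Fin l) ℝ),
      M.IsSymm → (∃ Y, phiFeas l U M Y) → ∃ Y, phiFeas l U M Y ∧ Y.rank ≤ k) :
    l + 1 ≤ k := by
  classical
  by_contra hcon
  push_neg at hcon
  obtain ⟨Y, hY, hrk⟩ := hk (Ub l) (Mb l hl) (Mb_symm l hl) ⟨Yw l hl, Yw_feas l hl⟩
  -- block entry conditions in `e`-form
  have hll : ∀ i j : Fin l, Y (e l (Sum.inl i)) (e l (Sum.inl j)) = if i = j then (1:ℝ) else 0 := by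
    intro i j; rw [e_inl, e_inl]; exact hY.2.2.1 i j
  have hrr : ∀ i j : Fin l, Y (e l (Sum.inr i)) (e l (Sum.inr j)) = if i = j then (1:ℝ) else 0 := by
    intro i j; rw [e_inr, e_inr]; exact hY.2.2.2 i j
  have hge := rank_ge l Y hll
  have hrkeq : Y.rank = l := le_antisymm (by omega) hge
  obtain ⟨C, hC⟩ := psd_decomp hY.1 hrkeq
  set C1 : Matrix (Fin l) (Fin l) ℝ := Matrix.of fun i k => C (e l (Sum.inl i)) k with hC1d
  set C2 : Matrix (Fin l) (Fin l) ℝ := Matrix.of fun i k => C (e l (Sum.inr i)) k with hC2d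
  have hCC : ∀ x y, Y (e l x) (e l y) = ∑ m, C (e l x) m * C (e l y) m := by
    intro x y
    rw [hC, Matrix.mul_apply]
    simp [Matrix.transpose_apply]
  have hC1 : C1 * C1ᵀ = 1 := by
    ext i j
    rw [Matrix.mul_apply]
    simp only [hC1d, Matrix.of_apply, Matrix.transpose_apply]
    rw [← hCC, hll i j, Matrix.one_apply]
  have hC2 : C2 * C2ᵀ = 1 := by
    ext i j
    rw [Matrix.mul_apply]
    simp only [hC2d, Matrix.of_apply, Matrix.transpose_apply]
    rw [← hCC, hrr i j, Matrix.one_apply]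
  set B : Matrix (Fin l) (Fin l) ℝ := C1 * C2ᵀ with hBd
  have hBY : ∀ i j, B i j = Y (e l (Sum.inl i)) (e l (Sum.inr j)) := by
    intro i j
    rw [hBd, Matrix.mul_apply, hCC]
    simp [hC1d, hC2d]
  have hYsym : ∀ p q, Y p q = Y q p := by
    intro p q
    have h := hY.1.1
    have := congrFun (congrFun h p) q
    rw [Matrix.conjTranspose_apply, star_trivial] at this
    exact this.symm
  -- constraint gives symmetric part of B
  have hBsum : ∀ i j, B i j + B j i = if i = j then 2 * sv l hl i else 0 := by
    intro i j
    have hcon2 := congrFun (congrFun hY.2.1 i) j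
    rw [quad_apply] at hcon2
    rw [hll i j, hrr i j] at hcon2
    have h1 : Y (e l (Sum.inr i)) (e l (Sum.inl j)) = B j i := by
      rw [hBY, hYsym]
    rw [h1, ← hBY i j] at hcon2
    by_cases h : i = j
    · subst h
      simp only [Mb, Matrix.of_apply, if_true] at hcon2
      simp only [if_true]
      linarith
    · simp only [Mb, Matrix.of_apply, h, if_false] at hcon2
      simp only [h, if_false]
      linarith
  have hC1tC1 : C1ᵀ * C1 = 1 := mul_eq_one_comm.mp hC1
  have hC2tC2 : C2ᵀ * C2 = 1 := mul_eq_one_comm.mp hC2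
  have hBtB : Bᵀ * B = 1 := by
    rw [hBd, Matrix.transpose_mul, Matrix.transpose_transpose]
    calc C2 * C1ᵀ * (C1 * C2ᵀ) = C2 * (C1ᵀ * C1) * C2ᵀ := by
          rw [Matrix.mul_assoc, Matrix.mul_assoc, Matrix.mul_assoc]
      _ = 1 := by rw [hC1tC1, Matrix.mul_one, hC2]
  have hBBt : B * Bᵀ = 1 := mul_eq_one_comm.mp hBtB
  have hBdiag : ∀ i, B i i = sv l hl i := by
    intro i
    have := hBsum i i
    simp only [if_true] at this
    linarith
  have hrow : ∀ i, i ≠ i0 l hl → B i (i0 l hl) = 0 := by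
    intro i hi
    have hBii : B i i = 1 := by rw [hBdiag]; simp [sv, hi]
    have hsum : ∑ k, B i k * B i k = 1 := by
      have := congrFun (congrFun hBBt i) i
      rw [Matrix.mul_apply] at this
      simp only [Matrix.transpose_apply] at this
      rw [this, Matrix.one_apply_eq]
    have herase : ∑ k ∈ Finset.univ.erase i, B i k * B i k = 0 := by
      have hsplit := Finset.add_sum_erase Finset.univ (fun k => B i k * B i k)
        (Finset.mem_univ i)
      have hsplit' : B i i * B i i + ∑ k ∈ Finset.univ.erase i, B i k * B i k =
          ∑ k, B i k * B i k := by simpa using hsplit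
      rw [hsum, hBii] at hsplit'
      linarith
    have hmem : i0 l hl ∈ Finset.univ.erase i := Finset.mem_erase.mpr ⟨(Ne.symm hi), Finset.mem_univ _⟩
    have := (Finset.sum_eq_zero_iff_of_nonneg (fun k _ => mul_self_nonneg (B i k))).mp
      herase (i0 l hl) hmem
    nlinarith [this]
  have hcol : ∑ k, B k (i0 l hl) * B k (i0 l hl) = 1 := by
    have := congrFun (congrFun hBtB (i0 l hl)) (i0 l hl)
    rw [Matrix.mul_apply] at this
    simp only [Matrix.transpose_apply] at this
    rw [this, Matrix.one_apply_eq]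
  have hcol2 : ∑ k, B k (i0 l hl) * B k (i0 l hl) = 1/4 := by
    have hsplit := Finset.add_sum_erase Finset.univ (fun k => B k (i0 l hl) * B k (i0 l hl))
      (Finset.mem_univ (i0 l hl))
    have hz : ∑ k ∈ Finset.univ.erase (i0 l hl), B k (i0 l hl) * B k (i0 l hl) = 0 := by
      apply Finset.sum_eq_zero
      intro k hkmem
      rw [hrow k (Finset.mem_erase.mp hkmem).1]
      ring
    have hb00 : B (i0 l hl) (i0 l hl) = 1/2 := by rw [hBdiag]; simp [sv]
    have hsplit' : B (i0 l hl) (i0 l hl) * B (i0 l hl) (i0 l hl) +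
        ∑ k ∈ Finset.univ.erase (i0 l hl), B k (i0 l hl) * B k (i0 l hl) =
        ∑ k, B k (i0 l hl) * B k (i0 l hl) := by simpa using hsplit
    rw [← hsplit', hz, hb00]
    norm_num
  rw [hcol] at hcol2
  norm_num at hcol2

end Lower

end PhiAux

/-- For every `ℓ ≥ 1`, `ℓ + 1 ≤ φ(ℓ) ≤ ⌊(√(12ℓ(ℓ+1)+1) − 1)/2⌋`. -/
theorem phi_bounds (l : ℕ) (hl : 1 ≤ l) :
    l + 1 ≤ phi l ∧
    (phi l : ℤ) ≤ ⌊(Real.sqrt (12 * (l : ℝ) * ((l : ℝ) + 1) + 1) - 1) / 2⌋ := by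
  classical
  set K : Set ℕ := {k : ℕ |
    ∀ (U : Matrix (Fin (2*l)) (Fin l) ℝ) (M : Matrix (Fin l) (Fin l) ℝ),
      M.IsSymm → (∃ Y, phiFeas l U M Y) → ∃ Y, phiFeas l U M Y ∧ Y.rank ≤ k} with hK
  have hz0 := PhiAux.floor_nonneg_bound l hl
  set z : ℤ := ⌊(Real.sqrt (12 * (l : ℝ) * ((l : ℝ) + 1) + 1) - 1) / 2⌋ with hz
  have hmem : z.toNat ∈ K := by
    intro U M hM hne
    obtain ⟨Y, hY, hb⟩ := PhiAux.exists_small_rank_feas l U M hne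
    exact ⟨Y, hY, (Int.le_toNat hz0).mpr (PhiAux.rank_le_bound l Y.rank hl hb)⟩
  constructor
  · have hphi : phi l ∈ K := Nat.sInf_mem ⟨z.toNat, hmem⟩
    exact PhiAux.lower_aux l hl (phi l) hphi
  · have h1 : phi l ≤ z.toNat := Nat.sInf_le hmem
    have h2 : (phi l : ℤ) ≤ (z.toNat : ℤ) := by exact_mod_cast h1
    rwa [Int.toNat_of_nonneg hz0] at h2
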